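/- Let T > 0, ν > 0, p_M > 0, R > 0, and let G¹, G² : ℝ → ℝ be continuous. Let r, p, W : [0,T] × ℝ → ℝ satisfy: r is continuously differentiable with 0 ≤ r ≤ 1; W is twice continuously differentiable in x with ∂_x W continuous on [0,T] × ℝ; 0 ≤ p ≤ p_M and W ≥ 0 everywhere; −ν ∂_x² W + W = p on [0,T] × ℝ; r(t,x)(1 − r(t,x)) = 0 whenever |x| ≥ R; and ∂_t r − (∂_x r)(∂_x W) = r (1 − r) ( G¹(p) − G²(p) ) on [0,T] × ℝ. If the two species are initially segregated, i.e. ∫_ℝ r(0,x)(1 − r(0,x)) dx = 0, then ∫_ℝ r(t,x)(1 − r(t,x)) dx = 0 for all t ∈ [0,T]. -/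

import Mathlib

open MeasureTheory Set
open Filter Topology
set_option maxHeartbeats 2000000

/-- propagation of segregation. If the population fraction `r` solves the
transport equation `∂_t r − (∂_x r)(∂_x W) = r(1−r)(G¹(p) − G²(p))` on `[0,T] × ℝ`,
where `W ≥ 0` solves Brinkman's law `−ν ∂_x² W + W = p` with `0 ≤ p ≤ p_M`, `0 ≤ r ≤ 1`,
`r(1−r)` compactly supported in space, and the species are initially segregated
(`∫ r(0,·)(1−r(0,·)) dx = 0`), then they remain segregated for all `t ∈ [0,T]`. -/
theorem segregation_propagates (T ν pM R : ℝ) (hT : 0 < T) (hν : 0 < ν) (hpM : 0 < pM)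
    (hR : 0 < R) (G₁ G₂ : ℝ → ℝ) (hG₁ : Continuous G₁) (hG₂ : Continuous G₂)
    (r p W : ℝ → ℝ → ℝ)
    (hr : ContDiffOn ℝ 1 (Function.uncurry r) (Icc 0 T ×ˢ (univ : Set ℝ)))
    (hr01 : ∀ t ∈ Icc (0 : ℝ) T, ∀ x : ℝ, r t x ∈ Icc (0 : ℝ) 1)
    (hW2 : ∀ t ∈ Icc (0 : ℝ) T, ContDiff ℝ 2 (W t))
    (hWxcont : ContinuousOn (fun q : ℝ × ℝ => deriv (W q.1) q.2)
      (Icc 0 T ×ˢ (univ : Set ℝ)))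
    (hp : ∀ t ∈ Icc (0 : ℝ) T, ∀ x : ℝ, p t x ∈ Icc (0 : ℝ) pM)
    (hW0 : ∀ t ∈ Icc (0 : ℝ) T, ∀ x : ℝ, 0 ≤ W t x)
    (hbrinkman : ∀ t ∈ Icc (0 : ℝ) T, ∀ x : ℝ,
      -ν * deriv (deriv (W t)) x + W t x = p t x)
    (hsupp : ∀ t ∈ Icc (0 : ℝ) T, ∀ x : ℝ, R ≤ |x| → r t x * (1 - r t x) = 0)
    (hpde : ∀ t ∈ Icc (0 : ℝ) T, ∀ x : ℝ,
      derivWithin (fun s : ℝ => r s x) (Icc 0 T) t - deriv (r t) x * deriv (W t) x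
        = r t x * (1 - r t x) * (G₁ (p t x) - G₂ (p t x)))
    (hinit : ∫ x : ℝ, r 0 x * (1 - r 0 x) = 0) :
    ∀ t ∈ Icc (0 : ℝ) T, ∫ x : ℝ, r t x * (1 - r t x) = 0 := by
  set S : Set (ℝ × ℝ) := Icc 0 T ×ˢ (univ : Set ℝ) with hSdef
  have hUD : UniqueDiffOn ℝ S := (uniqueDiffOn_Icc hT).prod uniqueDiffOn_univ
  set D : ℝ × ℝ → ℝ × ℝ →L[ℝ] ℝ := fun q => fderivWithin ℝ (Function.uncurry r) S q with hDdef
  have hfd : ∀ t ∈ Icc (0:ℝ) T, ∀ x : ℝ,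
      HasFDerivWithinAt (Function.uncurry r) (D (t, x)) S (t, x) := fun t ht x =>
    ((hr.differentiableOn one_ne_zero) (t, x) ⟨ht, mem_univ x⟩).hasFDerivWithinAt
  have hx_deriv : ∀ t ∈ Icc (0:ℝ) T, ∀ x : ℝ,
      HasDerivAt (fun y => r t y) (D (t, x) (0, 1)) x := by
    intro t ht x
    have hg : HasDerivWithinAt (fun y : ℝ => ((t, y) : ℝ × ℝ)) ((0:ℝ), (1:ℝ)) univ x :=
      ((hasDerivAt_const x t).prodMk (hasDerivAt_id x)).hasDerivWithinAt
    have := (hfd t ht x).comp_hasDerivWithinAt x hg (fun y _ => ⟨ht, mem_univ y⟩)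
    rw [hasDerivWithinAt_univ] at this
    exact this
  have ht_deriv : ∀ t ∈ Icc (0:ℝ) T, ∀ x : ℝ,
      HasDerivWithinAt (fun s => r s x) (D (t, x) (1, 0)) (Icc 0 T) t := by
    intro t ht x
    have hg : HasDerivWithinAt (fun s : ℝ => ((s, x) : ℝ × ℝ)) ((1:ℝ), (0:ℝ)) (Icc 0 T) t :=
      ((hasDerivAt_id t).prodMk (hasDerivAt_const t x)).hasDerivWithinAt
    exact (hfd t ht x).comp_hasDerivWithinAt t hg (fun s hs => (⟨hs, mem_univ x⟩ : (s, x) ∈ S))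
  have hDcont : ContinuousOn D S := hr.continuousOn_fderivWithin hUD le_rfl
  have hDxcont : ContinuousOn (fun q => D q (0, 1)) S :=
    (ContinuousLinearMap.apply ℝ ℝ ((0:ℝ), (1:ℝ))).continuous.comp_continuousOn hDcont
  -- the key transport identity in the `D` language
  have hpde' : ∀ t ∈ Icc (0:ℝ) T, ∀ x : ℝ,
      D (t, x) (1, 0) = D (t, x) (0, 1) * deriv (W t) x
        + r t x * (1 - r t x) * (G₁ (p t x) - G₂ (p t x)) := by
    intro t ht x
    have h1 : derivWithin (fun s : ℝ => r s x) (Icc 0 T) t = D (t, x) (1, 0) :=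
      (ht_deriv t ht x).derivWithin ((uniqueDiffOn_Icc hT) t ht)
    have h2 : deriv (r t) x = D (t, x) (0, 1) := (hx_deriv t ht x).deriv
    have := hpde t ht x
    rw [h1, h2] at this
    linarith
  -- constants
  set A : ℝ := R + 1 with hAdef
  have hA0 : 0 < A := by positivity
  have hA1 : (1:ℝ) ≤ A := by rw [hAdef]; linarith
  have hnotA : ∀ x : ℝ, x ∉ Icc (-A) A → R ≤ |x| := by
    intro x hx
    have hxA : A ≤ |x| := by
      by_contra h
      push_neg at h
      exact hx ⟨(abs_lt.mp h).1.le, (abs_lt.mp h).2.le⟩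
    rw [hAdef] at hxA
    linarith
  have hKcpt : IsCompact (Icc (0:ℝ) T ×ˢ Icc (-A) A) := isCompact_Icc.prod isCompact_Icc
  have hKsub : Icc (0:ℝ) T ×ˢ Icc (-A) A ⊆ S := by
    intro q hq; exact ⟨hq.1, mem_univ _⟩
  obtain ⟨C₁, hC₁⟩ := hKcpt.exists_bound_of_continuousOn (hDxcont.mono hKsub)
  obtain ⟨C₂, hC₂⟩ := hKcpt.exists_bound_of_continuousOn (hWxcont.mono hKsub)
  obtain ⟨Cg, hCg⟩ := isCompact_Icc.exists_bound_of_continuousOn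
    ((hG₁.sub hG₂).continuousOn (s := Icc (0:ℝ) pM))
  have hq00 : ((0:ℝ), (0:ℝ)) ∈ Icc (0:ℝ) T ×ˢ Icc (-A) A :=
    ⟨⟨le_rfl, hT.le⟩, ⟨neg_nonpos.mpr hA0.le, hA0.le⟩⟩
  have hC₁0 : 0 ≤ C₁ := le_trans (norm_nonneg _) (hC₁ _ hq00)
  have hC₂0 : 0 ≤ C₂ := le_trans (norm_nonneg _) (hC₂ _ hq00)
  have hCg0 : 0 ≤ Cg := le_trans (norm_nonneg _) (hCg 0 ⟨le_rfl, hpM.le⟩)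
  -- basic facts about r and u := r(1-r)
  have hu_nonneg : ∀ t ∈ Icc (0:ℝ) T, ∀ x : ℝ, 0 ≤ r t x * (1 - r t x) := by
    intro t ht x
    have h := hr01 t ht x
    nlinarith [h.1, h.2]
  have hu_le1 : ∀ t ∈ Icc (0:ℝ) T, ∀ x : ℝ, r t x * (1 - r t x) ≤ 1 := by
    intro t ht x
    have h := hr01 t ht x
    nlinarith [h.1, h.2]
  have h2r : ∀ t ∈ Icc (0:ℝ) T, ∀ x : ℝ, |1 - 2 * r t x| ≤ 1 := by
    intro t ht x
    have h := hr01 t ht x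
    rw [abs_le]; constructor <;> nlinarith [h.1, h.2]
  -- derivative in x of u
  have hasDerivAt_u : ∀ t ∈ Icc (0:ℝ) T, ∀ x : ℝ,
      HasDerivAt (fun y => r t y * (1 - r t y)) (D (t, x) (0, 1) * (1 - 2 * r t x)) x := by
    intro t ht x
    have h := hx_deriv t ht x
    have h2 : HasDerivAt (fun y => r t y * (1 - r t y))
        (D (t, x) (0, 1) * (1 - r t x) + r t x * (0 - D (t, x) (0, 1))) x :=
      h.mul ((hasDerivAt_const x (1:ℝ)).sub h)
    convert h2 using 1
    ring
  have hux0 : ∀ t ∈ Icc (0:ℝ) T, ∀ x : ℝ, R ≤ |x| →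
      D (t, x) (0, 1) * (1 - 2 * r t x) = 0 := by
    intro t ht x hx
    have hmin : IsLocalMin (fun y => r t y * (1 - r t y)) x := by
      apply Filter.Eventually.of_forall
      intro y
      show r t x * (1 - r t x) ≤ r t y * (1 - r t y)
      rw [hsupp t ht x hx]
      exact hu_nonneg t ht y
    exact hmin.hasDerivAt_eq_zero (hasDerivAt_u t ht x)
  -- continuity of u t in x, integrability
  have hcont_u : ∀ t ∈ Icc (0:ℝ) T, Continuous (fun x => r t x * (1 - r t x)) := by
    intro t ht
    have hc : Continuous (fun x => r t x) := by
      rw [continuous_iff_continuousAt]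
      exact fun x => (hx_deriv t ht x).continuousAt
    exact hc.mul (continuous_const.sub hc)
  have hcs_u : ∀ t ∈ Icc (0:ℝ) T, HasCompactSupport (fun x => r t x * (1 - r t x)) := by
    intro t ht
    apply HasCompactSupport.intro (isCompact_Icc (a := -A) (b := A))
    intro x hx
    exact hsupp t ht x (hnotA x hx)
  have hInt_u : ∀ t ∈ Icc (0:ℝ) T, Integrable (fun x => r t x * (1 - r t x)) :=
    fun t ht => (hcont_u t ht).integrable_of_hasCompactSupport (hcs_u t ht)
  -- regularity of W
  have hW1 : ∀ t ∈ Icc (0:ℝ) T, ContDiff ℝ 1 (deriv (W t)) := by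
    intro t ht
    have h2 := hW2 t ht
    rw [(by norm_num : (2 : WithTop ℕ∞) = 1 + 1)] at h2
    exact (contDiff_succ_iff_deriv.mp h2).2.2
  have hWdiff : ∀ t ∈ Icc (0:ℝ) T, ∀ x : ℝ,
      HasDerivAt (deriv (W t)) (deriv (deriv (W t)) x) x := fun t ht x =>
    (((hW1 t ht).differentiable one_ne_zero) x).hasDerivAt
  have hWderivAt : ∀ t ∈ Icc (0:ℝ) T, ∀ x : ℝ,
      HasDerivAt (W t) (deriv (W t) x) x := fun t ht x =>
    (((hW2 t ht).differentiable (by norm_num)) x).hasDerivAt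
  have hW''cont : ∀ t ∈ Icc (0:ℝ) T, Continuous (deriv (deriv (W t))) := fun t ht =>
    (hW1 t ht).continuous_deriv le_rfl
  have hWcont : ∀ t ∈ Icc (0:ℝ) T, Continuous (W t) := fun t ht => (hW2 t ht).continuous
  have hpcont : ∀ t ∈ Icc (0:ℝ) T, Continuous (fun x => p t x) := by
    intro t ht
    have : (fun x => p t x) = fun x => -ν * deriv (deriv (W t)) x + W t x :=
      funext fun x => (hbrinkman t ht x).symm
    rw [this]
    exact (continuous_const.mul (hW''cont t ht)).add (hWcont t ht)
  have hW''eq : ∀ t ∈ Icc (0:ℝ) T, ∀ x : ℝ,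
      deriv (deriv (W t)) x = (W t x - p t x) / ν := by
    intro t ht x
    have h := hbrinkman t ht x
    field_simp
    linarith
  have hIsub : ∀ s ∈ Icc (-A) A, Set.uIoc (0:ℝ) s ⊆ Icc (-A) A := by
    intro s hs x hx
    rcases le_total 0 s with h | h
    · rw [uIoc_of_le h] at hx
      exact ⟨by linarith [hx.1], le_trans hx.2 hs.2⟩
    · rw [uIoc_of_ge h] at hx
      exact ⟨le_trans hs.1 hx.1.le, by linarith [hx.2]⟩
  have hWx0 : ∀ t ∈ Icc (0:ℝ) T, ∀ s ∈ Icc (-A) A, |W t s - W t 0| ≤ C₂ * A := by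
    intro t ht s hs
    have hftc : ∫ x in (0:ℝ)..s, deriv (W t) x = W t s - W t 0 :=
      intervalIntegral.integral_eq_sub_of_hasDerivAt
        (fun x _ => hWderivAt t ht x)
        (((hW2 t ht).continuous_deriv (by norm_num)).intervalIntegrable 0 s)
    rw [← hftc]
    have hb : ∀ x ∈ Set.uIoc (0:ℝ) s, ‖deriv (W t) x‖ ≤ C₂ := fun x hx =>
      hC₂ (t, x) ⟨ht, hIsub s hs hx⟩
    calc |∫ x in (0:ℝ)..s, deriv (W t) x| ≤ C₂ * |s - 0| :=
          intervalIntegral.norm_integral_le_of_norm_le_const hb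
      _ ≤ C₂ * A := by
          rw [sub_zero]
          exact mul_le_mul_of_nonneg_left (abs_le.mpr ⟨hs.1, hs.2⟩) hC₂0
  have h1A : (1:ℝ) ∈ Icc (-A) A := ⟨by linarith, hA1⟩
  have h0A : (0:ℝ) ∈ Icc (-A) A := ⟨neg_nonpos.mpr hA0.le, hA0.le⟩
  have hW0bd : ∀ t ∈ Icc (0:ℝ) T, |W t 0| ≤ 2 * ν * C₂ + pM + C₂ * A := by
    intro t ht
    have hW''ftc : ∫ x in (0:ℝ)..1, deriv (deriv (W t)) x = deriv (W t) 1 - deriv (W t) 0 :=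
      intervalIntegral.integral_eq_sub_of_hasDerivAt (fun x _ => hWdiff t ht x)
        ((hW''cont t ht).intervalIntegrable 0 1)
    have hiW : IntervalIntegrable (W t) volume 0 1 := (hWcont t ht).intervalIntegrable 0 1
    have hiP : IntervalIntegrable (fun s => p t s) volume 0 1 :=
      (hpcont t ht).intervalIntegrable 0 1
    have hiW0 : IntervalIntegrable (fun s => W t s - W t 0) volume 0 1 :=
      hiW.sub intervalIntegrable_const
    have hiWP : IntervalIntegrable (fun s => W t s - p t s) volume 0 1 := hiW.sub hiP
    have e1 : ∫ s in (0:ℝ)..1, (W t s - p t s) = ν * (deriv (W t) 1 - deriv (W t) 0) := by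
      rw [← hW''ftc]
      rw [show (fun x => deriv (deriv (W t)) x) = fun x => (W t x - p t x) / ν from
        funext fun x => hW''eq t ht x]
      rw [intervalIntegral.integral_div]
      field_simp
    have e2 : W t 0 = (∫ s in (0:ℝ)..1, (W t s - p t s))
        - (∫ s in (0:ℝ)..1, (W t s - W t 0)) + ∫ s in (0:ℝ)..1, p t s := by
      rw [← intervalIntegral.integral_sub hiWP hiW0, ← intervalIntegral.integral_add
        (hiWP.sub hiW0) hiP]
      have : (fun s => W t s - p t s - (W t s - W t 0) + p t s) = fun _ => W t 0 := by
        funext s; ring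
      rw [this, intervalIntegral.integral_const]
      simp
    have b1 : |∫ s in (0:ℝ)..1, (W t s - p t s)| ≤ 2 * ν * C₂ := by
      rw [e1, abs_mul, abs_of_pos hν]
      have hd1 : ‖deriv (W t) 1‖ ≤ C₂ := hC₂ (t, 1) ⟨ht, h1A⟩
      have hd0 : ‖deriv (W t) 0‖ ≤ C₂ := hC₂ (t, 0) ⟨ht, h0A⟩
      have : |deriv (W t) 1 - deriv (W t) 0| ≤ 2 * C₂ := by
        calc |deriv (W t) 1 - deriv (W t) 0| ≤ |deriv (W t) 1| + |deriv (W t) 0| := abs_sub _ _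
          _ ≤ 2 * C₂ := by
            simp only [Real.norm_eq_abs] at hd1 hd0
            linarith
      calc ν * |deriv (W t) 1 - deriv (W t) 0| ≤ ν * (2 * C₂) :=
            mul_le_mul_of_nonneg_left this hν.le
        _ = 2 * ν * C₂ := by ring
    have b2 : |∫ s in (0:ℝ)..1, (W t s - W t 0)| ≤ C₂ * A := by
      have hb : ∀ x ∈ Set.uIoc (0:ℝ) 1, ‖W t x - W t 0‖ ≤ C₂ * A := by
        intro x hx
        exact hWx0 t ht x (hIsub 1 h1A hx)
      calc |∫ s in (0:ℝ)..1, (W t s - W t 0)| ≤ C₂ * A * |1 - 0| :=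
            intervalIntegral.norm_integral_le_of_norm_le_const hb
        _ = C₂ * A := by norm_num
    have b3 : |∫ s in (0:ℝ)..1, p t s| ≤ pM := by
      have hb : ∀ x ∈ Set.uIoc (0:ℝ) 1, ‖p t x‖ ≤ pM := by
        intro x _
        rw [Real.norm_eq_abs, abs_of_nonneg (hp t ht x).1]
        exact (hp t ht x).2
      calc |∫ s in (0:ℝ)..1, p t s| ≤ pM * |1 - 0| :=
            intervalIntegral.norm_integral_le_of_norm_le_const hb
        _ = pM := by norm_num
    rw [e2]
    have habs : |((∫ s in (0:ℝ)..1, (W t s - p t s)) - (∫ s in (0:ℝ)..1, (W t s - W t 0)))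
        + ∫ s in (0:ℝ)..1, p t s|
        ≤ (|∫ s in (0:ℝ)..1, (W t s - p t s)| + |∫ s in (0:ℝ)..1, (W t s - W t 0)|)
          + |∫ s in (0:ℝ)..1, p t s| :=
      (abs_add_le _ _).trans (add_le_add_left (abs_sub _ _) _)
    linarith
  set CW : ℝ := ((2 * ν * C₂ + pM + C₂ * A) + C₂ * A + pM) / ν with hCWdef
  have hCW0 : 0 ≤ CW := by
    rw [hCWdef]
    positivity
  have hW''bd : ∀ t ∈ Icc (0:ℝ) T, ∀ x ∈ Icc (-A) A, |deriv (deriv (W t)) x| ≤ CW := by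
    intro t ht x hx
    have hWb : |W t x| ≤ (2 * ν * C₂ + pM + C₂ * A) + C₂ * A := by
      have h1 := hWx0 t ht x hx
      have h0 := hW0bd t ht
      calc |W t x| = |W t 0 + (W t x - W t 0)| := congrArg abs (by ring)
        _ ≤ |W t 0| + |W t x - W t 0| := abs_add_le _ _
        _ ≤ _ := by linarith
    have hpb : |p t x| ≤ pM := by
      rw [abs_of_nonneg (hp t ht x).1]; exact (hp t ht x).2
    rw [hW''eq t ht x, hCWdef, abs_div, abs_of_pos hν]
    apply (div_le_div_iff_of_pos_right hν).mpr
    calc |W t x - p t x| ≤ |W t x| + |p t x| := abs_sub _ _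
      _ ≤ _ := by linarith
  -- the time derivative of u
  set F' : ℝ → ℝ → ℝ := fun t x =>
    (D (t, x) (0, 1) * (1 - 2 * r t x)) * deriv (W t) x
      + (1 - 2 * r t x) * ((G₁ (p t x) - G₂ (p t x)) * (r t x * (1 - r t x))) with hF'def
  have ht_u : ∀ t ∈ Icc (0:ℝ) T, ∀ x : ℝ,
      HasDerivWithinAt (fun s => r s x * (1 - r s x)) (F' t x) (Icc 0 T) t := by
    intro t ht x
    have h := ht_deriv t ht x
    have h2 : HasDerivWithinAt (fun s => r s x * (1 - r s x))
        (D (t, x) (1, 0) * (1 - r t x) + r t x * (0 - D (t, x) (1, 0))) (Icc 0 T) t :=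
      h.mul ((hasDerivWithinAt_const t (Icc 0 T) (1:ℝ)).sub h)
    have heq : D (t, x) (1, 0) * (1 - r t x) + r t x * (0 - D (t, x) (1, 0)) = F' t x := by
      rw [hF'def, hpde' t ht x]
      ring
    rw [heq] at h2
    exact h2
  have ht_u' : ∀ t ∈ Ioo (0:ℝ) T, ∀ x : ℝ,
      HasDerivAt (fun s => r s x * (1 - r s x)) (F' t x) t := fun t ht x =>
    (ht_u t (Ioo_subset_Icc_self ht) x).hasDerivAt (Icc_mem_nhds ht.1 ht.2)
  have hF'cont : ∀ t ∈ Icc (0:ℝ) T, Continuous (fun x => F' t x) := by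
    intro t ht
    have hc : Continuous (fun x => r t x) := by
      rw [continuous_iff_continuousAt]
      exact fun x => (hx_deriv t ht x).continuousAt
    have hcD : Continuous (fun x => D (t, x) (0, 1)) := by
      rw [← continuousOn_univ]
      exact hDxcont.comp ((continuous_const.prodMk continuous_id).continuousOn)
        (fun x _ => ⟨ht, mem_univ x⟩)
    have hcW : Continuous (fun x => deriv (W t) x) := (hW2 t ht).continuous_deriv (by norm_num)
    have hcp := hpcont t ht
    rw [hF'def]
    exact ((hcD.mul (continuous_const.sub (continuous_const.mul hc))).mul hcW).add
      ((continuous_const.sub (continuous_const.mul hc)).mul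
        (((hG₁.comp hcp).sub (hG₂.comp hcp)).mul (hc.mul (continuous_const.sub hc))))
  have hF'bd : ∀ t ∈ Icc (0:ℝ) T, ∀ x : ℝ,
      |F' t x| ≤ Set.indicator (Icc (-A) A) (fun _ => C₁ * C₂ + Cg) x := by
    intro t ht x
    by_cases hx : x ∈ Icc (-A) A
    · rw [Set.indicator_of_mem hx]
      have h1 : |D (t, x) (0, 1)| ≤ C₁ := by
        have := hC₁ (t, x) ⟨ht, hx⟩
        simpa using this
      have h2 := h2r t ht x
      have h3 : |deriv (W t) x| ≤ C₂ := by
        have := hC₂ (t, x) ⟨ht, hx⟩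
        simpa using this
      have h4 : |G₁ (p t x) - G₂ (p t x)| ≤ Cg := by
        have := hCg (p t x) ⟨(hp t ht x).1, (hp t ht x).2⟩
        simpa using this
      have h5 : |r t x * (1 - r t x)| ≤ 1 := by
        rw [abs_of_nonneg (hu_nonneg t ht x)]
        exact hu_le1 t ht x
      have e1 : |D (t, x) (0, 1)| * |1 - 2 * r t x| ≤ C₁ :=
        (mul_le_mul h1 h2 (abs_nonneg _) hC₁0).trans_eq (mul_one C₁)
      have e1' : |D (t, x) (0, 1)| * |1 - 2 * r t x| * |deriv (W t) x| ≤ C₁ * C₂ :=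
        mul_le_mul e1 h3 (abs_nonneg _) hC₁0
      have e2 : |G₁ (p t x) - G₂ (p t x)| * |r t x * (1 - r t x)| ≤ Cg :=
        (mul_le_mul h4 h5 (abs_nonneg _) hCg0).trans_eq (mul_one Cg)
      have e2' : |1 - 2 * r t x| * (|G₁ (p t x) - G₂ (p t x)| * |r t x * (1 - r t x)|)
          ≤ Cg := by
        have := mul_le_mul h2 e2 (mul_nonneg (abs_nonneg _) (abs_nonneg _)) zero_le_one
        rwa [one_mul] at this
      calc |F' t x| ≤ |(D (t, x) (0, 1) * (1 - 2 * r t x)) * deriv (W t) x|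
            + |(1 - 2 * r t x) * ((G₁ (p t x) - G₂ (p t x)) * (r t x * (1 - r t x)))| := by
            rw [hF'def]
            exact abs_add_le _ _
        _ ≤ C₁ * C₂ + Cg := by
            rw [abs_mul, abs_mul, abs_mul, abs_mul]
            linarith
    · rw [Set.indicator_of_notMem hx]
      have hxR := hnotA x hx
      have h0 := hux0 t ht x hxR
      have hu0 := hsupp t ht x hxR
      simp only [hF'def, h0, hu0, zero_mul, mul_zero, add_zero, abs_zero, le_refl]
  set F : ℝ → ℝ := fun t => ∫ x : ℝ, r t x * (1 - r t x) with hFdef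
  have hbound_int : Integrable (Set.indicator (Icc (-A) A) (fun _ => C₁ * C₂ + Cg)) := by
    have h : IntegrableOn (fun _ : ℝ => C₁ * C₂ + Cg) (Icc (-A) A) :=
      integrableOn_const measure_Icc_lt_top.ne
    exact h.integrable_indicator measurableSet_Icc
  have hFnonneg : ∀ t ∈ Icc (0:ℝ) T, 0 ≤ F t := fun t ht =>
    integral_nonneg (fun x => hu_nonneg t ht x)
  have hFcont : ContinuousOn F (Icc 0 T) := by
    intro t₀ ht₀
    apply tendsto_integral_filter_of_dominated_convergence
      (bound := Set.indicator (Icc (-A) A) (fun _ => (1:ℝ)))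
    · exact eventually_mem_nhdsWithin.mono fun t ht => ((hcont_u t ht).aestronglyMeasurable)
    · apply eventually_mem_nhdsWithin.mono
      intro t ht
      apply Eventually.of_forall
      intro x
      by_cases hx : x ∈ Icc (-A) A
      · rw [Set.indicator_of_mem hx, Real.norm_eq_abs, abs_of_nonneg (hu_nonneg t ht x)]
        exact hu_le1 t ht x
      · rw [Set.indicator_of_notMem hx, Real.norm_eq_abs, hsupp t ht x (hnotA x hx), abs_zero]
    · have h : IntegrableOn (fun _ : ℝ => (1:ℝ)) (Icc (-A) A) :=
        integrableOn_const measure_Icc_lt_top.ne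
      exact h.integrable_indicator measurableSet_Icc
    · apply Eventually.of_forall
      intro x
      have hcr : ContinuousOn (fun s => r s x) (Icc 0 T) :=
        (hr.continuousOn).comp
          ((continuous_id.prodMk continuous_const).continuousOn)
          (fun s hs => ⟨hs, mem_univ x⟩)
      exact (hcr.mul (continuousOn_const.sub hcr)) t₀ ht₀
  have hFderiv : ∀ t ∈ Ioo (0:ℝ) T, HasDerivAt F (∫ x : ℝ, F' t x) t := by
    intro t ht
    have hε : 0 < min t (T - t) := lt_min ht.1 (by linarith [ht.2])
    have hball : Metric.ball t (min t (T - t)) ⊆ Ioo 0 T := by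
      intro s hs
      rw [Real.ball_eq_Ioo] at hs
      constructor
      · have h1 : min t (T - t) ≤ t := min_le_left _ _
        linarith [hs.1]
      · have h2 : min t (T - t) ≤ T - t := min_le_right _ _
        linarith [hs.2]
    have hmeas : ∀ᶠ s in 𝓝 t, AEStronglyMeasurable (fun x => r s x * (1 - r s x)) volume :=
      Filter.eventually_of_mem (Icc_mem_nhds ht.1 ht.2)
        fun s hs => (hcont_u s hs).aestronglyMeasurable
    have hbd : ∀ᵐ x : ℝ, ∀ s ∈ Metric.ball t (min t (T - t)),
        ‖F' s x‖ ≤ Set.indicator (Icc (-A) A) (fun _ => C₁ * C₂ + Cg) x := by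
      apply Eventually.of_forall
      intro x s hs
      rw [Real.norm_eq_abs]
      exact hF'bd s (Ioo_subset_Icc_self (hball hs)) x
    have hdiff : ∀ᵐ x : ℝ, ∀ s ∈ Metric.ball t (min t (T - t)),
        HasDerivAt (fun s => r s x * (1 - r s x)) (F' s x) s := by
      apply Eventually.of_forall
      intro x s hs
      exact ht_u' s (hball hs) x
    exact (hasDerivAt_integral_of_dominated_loc_of_deriv_le (Metric.ball_mem_nhds t hε) hmeas
      (hInt_u t (Ioo_subset_Icc_self ht))
      (hF'cont t (Ioo_subset_Icc_self ht)).aestronglyMeasurable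
      hbd hbound_int hdiff).2
  -- integration by parts
  have hIBP : ∀ t ∈ Icc (0:ℝ) T, (∫ x : ℝ, F' t x) = ∫ x : ℝ,
      (-(r t x * (1 - r t x)) * deriv (deriv (W t)) x
        + (1 - 2 * r t x) * ((G₁ (p t x) - G₂ (p t x)) * (r t x * (1 - r t x)))) := by
    intro t ht
    have hc : Continuous (fun x => r t x) := by
      rw [continuous_iff_continuousAt]
      exact fun x => (hx_deriv t ht x).continuousAt
    have hcD : Continuous (fun x => D (t, x) (0, 1)) := by
      rw [← continuousOn_univ]
      exact hDxcont.comp ((continuous_const.prodMk continuous_id).continuousOn)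
        (fun x _ => ⟨ht, mem_univ x⟩)
    have hcW : Continuous (fun x => deriv (W t) x) := (hW2 t ht).continuous_deriv (by norm_num)
    have hch' : Continuous (fun x => (D (t, x) (0, 1) * (1 - 2 * r t x)) * deriv (W t) x
        + (r t x * (1 - r t x)) * deriv (deriv (W t)) x) :=
      ((hcD.mul (continuous_const.sub (continuous_const.mul hc))).mul hcW).add
        ((hc.mul (continuous_const.sub hc)).mul (hW''cont t ht))
    have hcg : Continuous (fun x => -(r t x * (1 - r t x)) * deriv (deriv (W t)) x
        + (1 - 2 * r t x) * ((G₁ (p t x) - G₂ (p t x)) * (r t x * (1 - r t x)))) := by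
      have hcp := hpcont t ht
      exact ((hc.mul (continuous_const.sub hc)).neg.mul (hW''cont t ht)).add
        ((continuous_const.sub (continuous_const.mul hc)).mul
          (((hG₁.comp hcp).sub (hG₂.comp hcp)).mul (hc.mul (continuous_const.sub hc))))
    have hh'supp : ∀ x : ℝ, x ∉ Icc (-A) A →
        (D (t, x) (0, 1) * (1 - 2 * r t x)) * deriv (W t) x
          + (r t x * (1 - r t x)) * deriv (deriv (W t)) x = 0 := by
      intro x hx
      rw [hux0 t ht x (hnotA x hx), hsupp t ht x (hnotA x hx)]
      ring
    have hgsupp : ∀ x : ℝ, x ∉ Icc (-A) A →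
        -(r t x * (1 - r t x)) * deriv (deriv (W t)) x
          + (1 - 2 * r t x) * ((G₁ (p t x) - G₂ (p t x)) * (r t x * (1 - r t x))) = 0 := by
      intro x hx
      rw [hsupp t ht x (hnotA x hx)]
      ring
    have hint_h' : Integrable (fun x => (D (t, x) (0, 1) * (1 - 2 * r t x)) * deriv (W t) x
        + (r t x * (1 - r t x)) * deriv (deriv (W t)) x) :=
      hch'.integrable_of_hasCompactSupport
        (HasCompactSupport.intro isCompact_Icc hh'supp)
    have hint_g : Integrable (fun x => -(r t x * (1 - r t x)) * deriv (deriv (W t)) x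
        + (1 - 2 * r t x) * ((G₁ (p t x) - G₂ (p t x)) * (r t x * (1 - r t x)))) :=
      hcg.integrable_of_hasCompactSupport
        (HasCompactSupport.intro isCompact_Icc hgsupp)
    have hI0 : (∫ x : ℝ, ((D (t, x) (0, 1) * (1 - 2 * r t x)) * deriv (W t) x
        + (r t x * (1 - r t x)) * deriv (deriv (W t)) x)) = 0 := by
      rw [← setIntegral_eq_integral_of_forall_compl_eq_zero hh'supp,
        integral_Icc_eq_integral_Ioc,
        ← intervalIntegral.integral_of_le (by linarith : -A ≤ A)]
      have hftc : (∫ x in (-A)..A, ((D (t, x) (0, 1) * (1 - 2 * r t x)) * deriv (W t) x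
          + (r t x * (1 - r t x)) * deriv (deriv (W t)) x))
          = (r t A * (1 - r t A)) * deriv (W t) A
            - (r t (-A) * (1 - r t (-A))) * deriv (W t) (-A) :=
        intervalIntegral.integral_eq_sub_of_hasDerivAt
          (fun x _ => (hasDerivAt_u t ht x).mul (hWdiff t ht x))
          (hch'.intervalIntegrable _ _)
      rw [hftc, hsupp t ht A (by rw [abs_of_pos hA0, hAdef]; linarith),
        hsupp t ht (-A) (by rw [abs_neg, abs_of_pos hA0, hAdef]; linarith)]
      ring
    have hsplit : (fun x : ℝ => F' t x) = fun x : ℝ =>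
        (-(r t x * (1 - r t x)) * deriv (deriv (W t)) x
          + (1 - 2 * r t x) * ((G₁ (p t x) - G₂ (p t x)) * (r t x * (1 - r t x))))
        + ((D (t, x) (0, 1) * (1 - 2 * r t x)) * deriv (W t) x
          + (r t x * (1 - r t x)) * deriv (deriv (W t)) x) := by
      funext x
      rw [hF'def]
      ring
    rw [hsplit, integral_add hint_g hint_h', hI0, add_zero]
  -- the Gronwall bound on the derivative
  have hKbound : ∀ t ∈ Icc (0:ℝ) T, |∫ x : ℝ, F' t x| ≤ (CW + Cg) * F t := by
    intro t ht
    rw [hIBP t ht]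
    have hptw : ∀ x : ℝ, ‖(-(r t x * (1 - r t x)) * deriv (deriv (W t)) x
        + (1 - 2 * r t x) * ((G₁ (p t x) - G₂ (p t x)) * (r t x * (1 - r t x))))‖
        ≤ (CW + Cg) * (r t x * (1 - r t x)) := by
      intro x
      by_cases hx : x ∈ Icc (-A) A
      · have hu0 := hu_nonneg t ht x
        have h2 := h2r t ht x
        have h4 : |G₁ (p t x) - G₂ (p t x)| ≤ Cg := by
          have := hCg (p t x) ⟨(hp t ht x).1, (hp t ht x).2⟩
          simpa using this
        have hW'' := hW''bd t ht x hx
        have b1 : |(-(r t x * (1 - r t x))) * deriv (deriv (W t)) x|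
            ≤ (r t x * (1 - r t x)) * CW := by
          rw [abs_mul, abs_neg, abs_of_nonneg hu0]
          exact mul_le_mul_of_nonneg_left hW'' hu0
        have b2 : |(1 - 2 * r t x) * ((G₁ (p t x) - G₂ (p t x)) * (r t x * (1 - r t x)))|
            ≤ 1 * (Cg * (r t x * (1 - r t x))) := by
          rw [abs_mul, abs_mul, abs_of_nonneg hu0]
          exact mul_le_mul h2
            (mul_le_mul_of_nonneg_right h4 hu0)
            (mul_nonneg (abs_nonneg _) hu0) zero_le_one
        have hre : (r t x * (1 - r t x)) * CW + 1 * (Cg * (r t x * (1 - r t x)))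
            = (CW + Cg) * (r t x * (1 - r t x)) := by ring
        rw [Real.norm_eq_abs]
        calc |(-(r t x * (1 - r t x)) * deriv (deriv (W t)) x
              + (1 - 2 * r t x) * ((G₁ (p t x) - G₂ (p t x)) * (r t x * (1 - r t x))))|
            ≤ |(-(r t x * (1 - r t x))) * deriv (deriv (W t)) x|
              + |(1 - 2 * r t x) * ((G₁ (p t x) - G₂ (p t x)) * (r t x * (1 - r t x)))| :=
              abs_add_le _ _
          _ ≤ (CW + Cg) * (r t x * (1 - r t x)) := by linarith
      · rw [Real.norm_eq_abs, hsupp t ht x (hnotA x hx)]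
        simp
    have hintK : Integrable (fun x => (CW + Cg) * (r t x * (1 - r t x))) :=
      (hInt_u t ht).const_mul _
    have hnb := norm_integral_le_of_norm_le hintK (Eventually.of_forall hptw)
    rw [Real.norm_eq_abs] at hnb
    calc |∫ x : ℝ, (-(r t x * (1 - r t x)) * deriv (deriv (W t)) x
          + (1 - 2 * r t x) * ((G₁ (p t x) - G₂ (p t x)) * (r t x * (1 - r t x))))|
        ≤ ∫ x : ℝ, (CW + Cg) * (r t x * (1 - r t x)) := hnb
      _ = (CW + Cg) * F t := by
          rw [hFdef]
          exact integral_const_mul _ _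
  have hK0 : 0 ≤ CW + Cg := by linarith
  -- Gronwall on [a, T] for 0 < a
  have key : ∀ t₀ ∈ Icc (0:ℝ) T, 0 < t₀ → ∀ a ∈ Ioo (0:ℝ) t₀,
      F t₀ ≤ F a * Real.exp ((CW + Cg) * T) := by
    intro t₀ ht₀ ht₀pos a ha
    have haT : a ∈ Icc (0:ℝ) T := ⟨ha.1.le, le_trans ha.2.le ht₀.2⟩
    have hgr := norm_le_gronwallBound_of_norm_deriv_right_le
      (f := F) (f' := fun s => ∫ x : ℝ, F' s x) (δ := F a) (K := CW + Cg) (ε := 0)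
      (a := a) (b := T)
      (hFcont.mono (Icc_subset_Icc ha.1.le le_rfl))
      (fun s hs => (hFderiv s ⟨lt_of_lt_of_le ha.1 hs.1, hs.2⟩).hasDerivWithinAt)
      (by rw [Real.norm_eq_abs, abs_of_nonneg (hFnonneg a haT)])
      (fun s hs => by
        have hsIcc : s ∈ Icc (0:ℝ) T := ⟨le_trans ha.1.le hs.1, hs.2.le⟩
        rw [Real.norm_eq_abs, Real.norm_eq_abs, abs_of_nonneg (hFnonneg s hsIcc), add_zero]
        exact hKbound s hsIcc)
      t₀ ⟨ha.2.le, ht₀.2⟩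
    rw [Real.norm_eq_abs, abs_of_nonneg (hFnonneg t₀ ht₀), gronwallBound_ε0] at hgr
    refine hgr.trans ?_
    have hee : Real.exp ((CW + Cg) * (t₀ - a)) ≤ Real.exp ((CW + Cg) * T) :=
      Real.exp_le_exp.mpr (mul_le_mul_of_nonneg_left (by linarith [ht₀.2, ha.1]) hK0)
    exact mul_le_mul_of_nonneg_left hee (hFnonneg a haT)
  -- conclusion
  intro t₀ ht₀
  show F t₀ = 0
  rcases eq_or_lt_of_le ht₀.1 with h0 | h0
  · rw [← h0]
    exact hinit
  · haveI : (𝓝[Ioo (0:ℝ) t₀] (0:ℝ)).NeBot := by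
      rw [nhdsWithin_Ioo_eq_nhdsGT h0]
      infer_instance
    have hlim : Tendsto (fun a => F a * Real.exp ((CW + Cg) * T)) (𝓝[Ioo (0:ℝ) t₀] 0)
        (𝓝 0) := by
      have hc : Tendsto F (𝓝[Icc 0 T] 0) (𝓝 (F 0)) := hFcont 0 ⟨le_rfl, hT.le⟩
      have hF0 : F 0 = 0 := hinit
      rw [hF0] at hc
      have hmono : 𝓝[Ioo (0:ℝ) t₀] (0:ℝ) ≤ 𝓝[Icc 0 T] 0 :=
        nhdsWithin_mono 0 (fun x hx => ⟨hx.1.le, le_trans hx.2.le ht₀.2⟩)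
      have := (hc.mono_left hmono).mul_const (Real.exp ((CW + Cg) * T))
      simpa using this
    have hle : F t₀ ≤ 0 :=
      ge_of_tendsto hlim
        (eventually_mem_nhdsWithin.mono fun a ha => key t₀ ht₀ h0 a ha)
    have hge : 0 ≤ F t₀ := hFnonneg t₀ ht₀
    linarith
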